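/- arXiv:2111.15223 — 3 statements merged into one kernel-verified Lean document; each statement's English description precedes it below -/
import Mathlib

section
/- Let N ≥ 3 and 2 ≤ i ≤ N−1, and let q, z be nonzero complex numbers with z² ≠ 1 and z² ≠ q² (so that Ř(z) and Ř(qz) are defined). Then, as linear maps (ℂ²)^{⊗(N−2)} → (ℂ²)^{⊗N}, one has Ř_{i,i+1}(qz) ∘ Ř_{i−1,i}(z) ∘ Ξ_N^i = −([q²z]/[q/z]) · Ξ_N^{i−1} and Ř_{i−1,i}(qz) ∘ Ř_{i,i+1}(z) ∘ Ξ_N^{i−1} = −([q²z]/[q/z]) · Ξ_N^i. -/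
noncomputable section

/-- `[w] = w − w⁻¹`. -/
def cb (w : ℂ) : ℂ := w - w⁻¹

/-- The six-vertex `Ř`-matrix on `ℂ² ⊗ ℂ²` (basis order `↑↑, ↑↓, ↓↑, ↓↓`,
with `0 = ↑`, `1 = ↓`): diagonal weights `a, c, c, a` and off-diagonal weight
`b` on the spin-exchanging entries. -/
def Rhat (q z : ℂ) : Matrix (Fin 2 × Fin 2) (Fin 2 × Fin 2) ℂ :=
  Matrix.of fun p p' =>
    if p = p' then (if p.1 = p.2 then cb (q*z) / cb (q/z) else cb q / cb (q/z))
    else if p.1 = p'.2 ∧ p.2 = p'.1 then cb z / cb (q/z) else 0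

/-- The operator on `(ℂ²)^{⊗N}` acting as the `4×4` matrix `M` on the (0-based)
tensor factors `k, k+1` and as the identity elsewhere. -/
def twoSiteOp (N : ℕ) (k : ℕ) (h : k + 1 < N) (M : Matrix (Fin 2 × Fin 2) (Fin 2 × Fin 2) ℂ) :
    Matrix (Fin N → Fin 2) (Fin N → Fin 2) ℂ :=
  Matrix.of fun α β =>
    M (α ⟨k, by omega⟩, α ⟨k+1, h⟩) (β ⟨k, by omega⟩, β ⟨k+1, h⟩) *
      ∏ j ∈ (Finset.univ.erase (⟨k, by omega⟩ : Fin N)).erase ⟨k+1, h⟩,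
        (if α j = β j then (1 : ℂ) else 0)

/-- Components of the singlet `s = |↑↓⟩ − |↓↑⟩`. -/
def sComp (a b : Fin 2) : ℂ :=
  if a = 0 ∧ b = 1 then 1 else if a = 1 ∧ b = 0 then -1 else 0

/-- The index of `(ℂ²)^{⊗N}` corresponding to index `j` of `(ℂ²)^{⊗(N−2)}` after
inserting two new factors at the (0-based) positions `k, k+1`. -/
def insIdx (N k : ℕ) (j : Fin (N-2)) : Fin N :=
  if j.1 < k then ⟨j.1, by have := j.2; omega⟩ else ⟨j.1 + 2, by have := j.2; omega⟩

/-- The map `Ξ` inserting the singlet `s` at the (0-based) positions `k, k+1`,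
as a rectangular matrix `(ℂ²)^{⊗(N−2)} → (ℂ²)^{⊗N}`. -/
def Xi (N k : ℕ) (h : k + 1 < N) : Matrix (Fin N → Fin 2) (Fin (N-2) → Fin 2) ℂ :=
  Matrix.of fun α γ =>
    sComp (α ⟨k, by omega⟩) (α ⟨k+1, h⟩) *
      ∏ j : Fin (N-2), (if α (insIdx N k j) = γ j then (1 : ℂ) else 0)

/-! ### Auxiliary algebraic lemmas -/

lemma hA' {q z : ℂ} (hzq : z^2 ≠ q^2) : (q^2 - z^2) ≠ 0 := sub_ne_zero.2 (Ne.symm hzq)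
lemma hB' {z : ℂ} (hz1 : z^2 ≠ 1) : (1 - z^2) ≠ 0 := sub_ne_zero.2 (Ne.symm hz1)

lemma hC' {q z : ℂ} (hq : q ≠ 0) (hz : z ≠ 0) (hzq : z^2 ≠ q^2) : cb (q/z) ≠ 0 := by
  have : cb (q/z) = (q^2 - z^2)/(q*z) := by rw [cb]; field_simp
  rw [this]; exact div_ne_zero (hA' hzq) (mul_ne_zero hq hz)

lemma hD' {q z : ℂ} (hq : q ≠ 0) (hz : z ≠ 0) (hz1 : z^2 ≠ 1) : cb (q/(q*z)) ≠ 0 := by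
  have : cb (q/(q*z)) = (1 - z^2)/z := by rw [cb]; field_simp
  rw [this]; exact div_ne_zero (hB' hz1) hz

section ratios
variable {q z : ℂ}

lemma r1 (hq : q ≠ 0) (hz : z ≠ 0) (hzq : z^2 ≠ q^2) :
    cb (q*z) / cb (q/z) = (q^2*z^2-1)/(q^2-z^2) := by
  rw [div_eq_div_iff (hC' hq hz hzq) (hA' hzq), cb, cb]; field_simp
lemma r2 (hq : q ≠ 0) (hz : z ≠ 0) (hzq : z^2 ≠ q^2) :
    cb q / cb (q/z) = z*(q^2-1)/(q^2-z^2) := by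
  rw [div_eq_div_iff (hC' hq hz hzq) (hA' hzq), cb, cb]; field_simp
lemma r3 (hq : q ≠ 0) (hz : z ≠ 0) (hzq : z^2 ≠ q^2) :
    cb z / cb (q/z) = q*(z^2-1)/(q^2-z^2) := by
  rw [div_eq_div_iff (hC' hq hz hzq) (hA' hzq), cb, cb]; field_simp
lemma r4 (hq : q ≠ 0) (hz : z ≠ 0) (hz1 : z^2 ≠ 1) :
    cb (q*(q*z)) / cb (q/(q*z)) = (q^4*z^2-1)/(q^2*(1-z^2)) := by
  have hB := hB' hz1
  have n : cb (q*(q*z)) = (q^4*z^2-1)/(q^2*z) := by rw [cb]; field_simp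
  have d : cb (q/(q*z)) = (1-z^2)/z := by rw [cb]; field_simp
  rw [n, d]; field_simp
lemma r5 (hq : q ≠ 0) (hz : z ≠ 0) (hz1 : z^2 ≠ 1) :
    cb q / cb (q/(q*z)) = z*(q^2-1)/(q*(1-z^2)) := by
  rw [div_eq_div_iff (hD' hq hz hz1) (mul_ne_zero hq (hB' hz1)), cb, cb]; field_simp
lemma r6 (hq : q ≠ 0) (hz : z ≠ 0) (hz1 : z^2 ≠ 1) :
    cb (q*z) / cb (q/(q*z)) = (q^2*z^2-1)/(q*(1-z^2)) := by
  rw [div_eq_div_iff (hD' hq hz hz1) (mul_ne_zero hq (hB' hz1)), cb, cb]; field_simp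
lemma r7 (hq : q ≠ 0) (hz : z ≠ 0) (hzq : z^2 ≠ q^2) :
    cb (q^2*z) / cb (q/z) = (q^4*z^2-1)/(q*(q^2-z^2)) := by
  rw [div_eq_div_iff (hC' hq hz hzq) (mul_ne_zero hq (hA' hzq)), cb, cb]; field_simp

/-! ### The local (three-site) versions of the two identities -/

set_option maxHeartbeats 2000000 in
lemma key1 (hq : q ≠ 0) (hz : z ≠ 0) (hz1 : z^2 ≠ 1) (hzq : z^2 ≠ q^2) (a b c d : Fin 2) :
    ∑ u : Fin 2, ∑ v : Fin 2, Rhat q (q*z) (b,c) (u,v) *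
      (∑ u' : Fin 2, ∑ v' : Fin 2, Rhat q z (a,u) (u',v') * (sComp v' v * if u' = d then (1:ℂ) else 0))
    = -(cb (q^2*z) / cb (q/z)) * (sComp a b * if c = d then (1:ℂ) else 0) := by
  have hA : (q^2 - z^2) ≠ 0 := hA' hzq
  have hB : (1 - z^2) ≠ 0 := hB' hz1
  have f2 : ∀ x : Fin 2, x = 0 ∨ x = 1 := by decide
  rcases f2 a with rfl|rfl <;> rcases f2 b with rfl|rfl <;> rcases f2 c with rfl|rfl <;>
    rcases f2 d with rfl|rfl <;>
    simp only [Rhat, Matrix.of_apply, sComp, Fin.sum_univ_two, Prod.mk.injEq,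
      r1 hq hz hzq, r2 hq hz hzq, r3 hq hz hzq, r4 hq hz hz1, r5 hq hz hz1, r6 hq hz hz1,
      r7 hq hz hzq, show (0:Fin 2) ≠ 1 by decide, show (1:Fin 2) ≠ 0 by decide]
  all_goals norm_num
  all_goals field_simp
  all_goals ring

set_option maxHeartbeats 2000000 in
lemma key2 (hq : q ≠ 0) (hz : z ≠ 0) (hz1 : z^2 ≠ 1) (hzq : z^2 ≠ q^2) (a b c d : Fin 2) :
    ∑ u : Fin 2, ∑ v : Fin 2, Rhat q (q*z) (a,b) (u,v) *
      (∑ u' : Fin 2, ∑ v' : Fin 2, Rhat q z (v,c) (u',v') * (sComp u u' * if v' = d then (1:ℂ) else 0))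
    = -(cb (q^2*z) / cb (q/z)) * (sComp b c * if a = d then (1:ℂ) else 0) := by
  have hA : (q^2 - z^2) ≠ 0 := hA' hzq
  have hB : (1 - z^2) ≠ 0 := hB' hz1
  have f2 : ∀ x : Fin 2, x = 0 ∨ x = 1 := by decide
  rcases f2 a with rfl|rfl <;> rcases f2 b with rfl|rfl <;> rcases f2 c with rfl|rfl <;>
    rcases f2 d with rfl|rfl <;>
    simp only [Rhat, Matrix.of_apply, sComp, Fin.sum_univ_two, Prod.mk.injEq,
      r1 hq hz hzq, r2 hq hz hzq, r3 hq hz hzq, r4 hq hz hz1, r5 hq hz hz1, r6 hq hz hz1,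
      r7 hq hz hzq, show (0:Fin 2) ≠ 1 by decide, show (1:Fin 2) ≠ 0 by decide]
  all_goals norm_num
  all_goals field_simp
  all_goals ring

end ratios

/-! ### Structural lemmas: localized operators -/

lemma sumCollapse2 {N : ℕ} (a b : Fin N) (hab : a ≠ b) (α : Fin N → Fin 2)
    (F : Fin 2 → Fin 2 → (Fin N → Fin 2) → ℂ)
    (hF : ∀ u v (β : Fin N → Fin 2), (∀ j, j ≠ a → j ≠ b → β j = α j) → F u v β = F u v α) :
    ∑ β : Fin N → Fin 2, F (β a) (β b) β *
      ∏ j ∈ (Finset.univ.erase a).erase b, (if α j = β j then (1:ℂ) else 0)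
    = ∑ u : Fin 2, ∑ v : Fin 2, F u v α := by
  classical
  set f : Fin 2 × Fin 2 → (Fin N → Fin 2) :=
    fun p => Function.update (Function.update α a p.1) b p.2 with hf
  have hfa : ∀ p, f p a = p.1 := by
    intro p; simp [hf, Function.update_apply, hab]
  have hfb : ∀ p, f p b = p.2 := by
    intro p; simp [hf]
  have hfj : ∀ p (j : Fin N), j ≠ a → j ≠ b → f p j = α j := by
    intro p j hja hjb; simp [hf, Function.update_apply, hja, hjb]
  have hvanish : ∀ β ∈ (Finset.univ : Finset (Fin N → Fin 2)),
      β ∉ Finset.univ.image f →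
      F (β a) (β b) β * ∏ j ∈ (Finset.univ.erase a).erase b, (if α j = β j then (1:ℂ) else 0) = 0 := by
    intro β _ hβ
    have hex : ∃ j, j ≠ a ∧ j ≠ b ∧ β j ≠ α j := by
      by_contra hcon
      push_neg at hcon
      apply hβ
      refine Finset.mem_image.2 ⟨(β a, β b), Finset.mem_univ _, ?_⟩
      funext j
      by_cases hja : j = a
      · subst hja; rw [hfa]
      · by_cases hjb : j = b
        · subst hjb; rw [hfb]
        · rw [hfj _ _ hja hjb]; exact (hcon j hja hjb).symm
    obtain ⟨j, hja, hjb, hne⟩ := hex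
    have hmem : j ∈ (Finset.univ.erase a).erase b := by
      simp [Finset.mem_erase, hja, hjb]
    have hz0 : (∏ j ∈ (Finset.univ.erase a).erase b, if α j = β j then (1:ℂ) else 0) = 0 :=
      Finset.prod_eq_zero hmem (if_neg (fun h => hne h.symm))
    rw [hz0, mul_zero]
  have hinj : ∀ x ∈ (Finset.univ : Finset (Fin 2 × Fin 2)), ∀ y ∈ Finset.univ,
      f x = f y → x = y := by
    intro x _ y _ hxy
    have h1 := congrFun hxy a
    have h2 := congrFun hxy b
    rw [hfa, hfa] at h1
    rw [hfb, hfb] at h2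
    exact Prod.ext h1 h2
  rw [← Finset.sum_subset (Finset.subset_univ (Finset.univ.image f)) hvanish,
    Finset.sum_image hinj, Fintype.sum_prod_type]
  refine Finset.sum_congr rfl fun u _ => Finset.sum_congr rfl fun v _ => ?_
  rw [hfa, hfb, hF _ _ _ (hfj (u,v)),
    Finset.prod_congr rfl (fun j hj => by
      obtain ⟨hjb, hja⟩ := Finset.mem_erase.1 hj
      obtain ⟨hja', -⟩ := Finset.mem_erase.1 hja
      rw [hfj (u,v) j hja' hjb, if_pos rfl]),
    Finset.prod_const_one, mul_one]

/-- An operator `(ℂ²)^{⊗(N−2)} → (ℂ²)^{⊗N}` acting "locally" at the positions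
`k, k+1, k+2`. -/
def Lloc (N k : ℕ) (h : k + 1 + 1 < N) (T : Fin 2 → Fin 2 → Fin 2 → Fin 2 → ℂ) :
    Matrix (Fin N → Fin 2) (Fin (N-2) → Fin 2) ℂ :=
  Matrix.of fun α γ =>
    T (α ⟨k, by omega⟩) (α ⟨k+1, by omega⟩) (α ⟨k+1+1, h⟩) (γ ⟨k, by omega⟩) *
      ∏ j ∈ Finset.univ.erase (⟨k, by omega⟩ : Fin (N-2)),
        (if α (insIdx N k j) = γ j then (1:ℂ) else 0)

lemma insIdx_val {N k : ℕ} (j : Fin (N-2)) :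
    (insIdx N k j).1 = if j.1 < k then j.1 else j.1 + 2 := by
  unfold insIdx; split_ifs <;> rfl

lemma insIdx_ne {N k : ℕ} (j : Fin (N-2)) (hj : j.1 ≠ k) (m : ℕ) (hm1 : k ≤ m) (hm2 : m ≤ k+2)
    (hmN : m < N) : insIdx N k j ≠ ⟨m, hmN⟩ := by
  intro hEq
  have h := congrArg Fin.val hEq
  rw [insIdx_val] at h
  simp only at h
  split_ifs at h <;> omega

lemma insIdx_succ {N k : ℕ} (j : Fin (N-2)) (hj : j.1 ≠ k) :
    insIdx N (k+1) j = insIdx N k j := by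
  rcases lt_trichotomy j.1 k with h|h|h
  · simp [insIdx, h, Nat.lt_succ_of_lt h]
  · exact absurd h hj
  · have h1 : ¬ j.1 < k := by omega
    have h2 : ¬ j.1 < k+1 := by omega
    simp [insIdx, h1, h2]

lemma Xi_succ_eq (N k : ℕ) (h : k + 1 + 1 < N) (h' : (k+1) + 1 < N) :
    Xi N (k+1) h' = Lloc N k h (fun a b c d => sComp b c * (if a = d then (1:ℂ) else 0)) := by
  ext α γ
  simp only [Xi, Lloc, Matrix.of_apply]
  have hk2 : k < N - 2 := by omega
  rw [← Finset.mul_prod_erase Finset.univ _ (Finset.mem_univ (⟨k, hk2⟩ : Fin (N-2)))]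
  have h0 : insIdx N (k+1) (⟨k, hk2⟩ : Fin (N-2)) = ⟨k, by omega⟩ := by
    simp [insIdx]
  rw [h0, Finset.prod_congr rfl (fun j hj => by
    rw [insIdx_succ j (fun hc => (Finset.mem_erase.1 hj).1 (Fin.ext hc))])]
  ring

lemma Xi_self_eq (N k : ℕ) (h : k + 1 + 1 < N) (h'' : k + 1 < N) :
    Xi N k h'' = Lloc N k h (fun a b c d => sComp a b * (if c = d then (1:ℂ) else 0)) := by
  ext α γ
  simp only [Xi, Lloc, Matrix.of_apply]
  have hk2 : k < N - 2 := by omega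
  rw [← Finset.mul_prod_erase Finset.univ _ (Finset.mem_univ (⟨k, hk2⟩ : Fin (N-2)))]
  have h0 : insIdx N k (⟨k, hk2⟩ : Fin (N-2)) = ⟨k+1+1, h⟩ := by
    simp [insIdx]
  rw [h0]
  ring

lemma smul_Lloc (N k : ℕ) (h : k + 1 + 1 < N) (c : ℂ) (T : Fin 2 → Fin 2 → Fin 2 → Fin 2 → ℂ) :
    c • Lloc N k h T = Lloc N k h (fun a b c' d => c * T a b c' d) := by
  ext α γ
  simp only [Lloc, Matrix.smul_apply, Matrix.of_apply, smul_eq_mul]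
  ring

lemma mul_low (N k : ℕ) (h : k + 1 + 1 < N) (h1 : k + 1 < N)
    (M : Matrix (Fin 2 × Fin 2) (Fin 2 × Fin 2) ℂ) (T : Fin 2 → Fin 2 → Fin 2 → Fin 2 → ℂ) :
    twoSiteOp N k h1 M * Lloc N k h T
      = Lloc N k h (fun a b c d => ∑ u : Fin 2, ∑ v : Fin 2, M (a,b) (u,v) * T u v c d) := by
  ext α γ
  rw [Matrix.mul_apply]
  have hk2 : k < N - 2 := by omega
  have step1 : ∀ β : Fin N → Fin 2,
      twoSiteOp N k h1 M α β * Lloc N k h T β γ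
      = (fun u v (β' : Fin N → Fin 2) =>
          M (α ⟨k, by omega⟩, α ⟨k+1, by omega⟩) (u,v) *
            (T u v (β' ⟨k+1+1, h⟩) (γ ⟨k, hk2⟩) *
              ∏ j ∈ Finset.univ.erase (⟨k, hk2⟩ : Fin (N-2)),
                (if β' (insIdx N k j) = γ j then (1:ℂ) else 0)))
          (β ⟨k, by omega⟩) (β ⟨k+1, by omega⟩) β *
        ∏ j ∈ (Finset.univ.erase (⟨k, by omega⟩ : Fin N)).erase ⟨k+1, by omega⟩,
          (if α j = β j then (1:ℂ) else 0) := by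
    intro β
    simp only [twoSiteOp, Lloc, Matrix.of_apply]
    ring
  have key := sumCollapse2 (⟨k, by omega⟩ : Fin N) ⟨k+1, by omega⟩
    (by simp only [ne_eq, Fin.mk.injEq]; omega) α
    (fun u v (β' : Fin N → Fin 2) =>
          M (α ⟨k, by omega⟩, α ⟨k+1, by omega⟩) (u,v) *
            (T u v (β' ⟨k+1+1, h⟩) (γ ⟨k, hk2⟩) *
              ∏ j ∈ Finset.univ.erase (⟨k, hk2⟩ : Fin (N-2)),
                (if β' (insIdx N k j) = γ j then (1:ℂ) else 0)))
    (by
      intro u v β hβ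
      have e2 : β ⟨k+1+1, h⟩ = α ⟨k+1+1, h⟩ :=
        hβ _ (by simp only [ne_eq, Fin.mk.injEq]; omega)
          (by simp only [ne_eq, Fin.mk.injEq]; omega)
      rw [e2, Finset.prod_congr rfl (fun j hj => by
        have hjk : j.1 ≠ k := fun hc => (Finset.mem_erase.1 hj).1 (Fin.ext hc)
        rw [hβ _ (insIdx_ne j hjk k le_rfl (by omega) _)
          (insIdx_ne j hjk (k+1) (by omega) (by omega) _)])])
  rw [Finset.sum_congr rfl (fun β _ => step1 β), key]
  simp only [Lloc, Matrix.of_apply]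
  rw [Finset.sum_mul]
  refine Finset.sum_congr rfl fun u _ => ?_
  rw [Finset.sum_mul]
  exact Finset.sum_congr rfl fun v _ => by ring

lemma mul_high (N k : ℕ) (h : k + 1 + 1 < N) (h2 : (k+1) + 1 < N)
    (M : Matrix (Fin 2 × Fin 2) (Fin 2 × Fin 2) ℂ) (T : Fin 2 → Fin 2 → Fin 2 → Fin 2 → ℂ) :
    twoSiteOp N (k+1) h2 M * Lloc N k h T
      = Lloc N k h (fun a b c d => ∑ u : Fin 2, ∑ v : Fin 2, M (b,c) (u,v) * T a u v d) := by
  ext α γ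
  rw [Matrix.mul_apply]
  have hk2 : k < N - 2 := by omega
  have step1 : ∀ β : Fin N → Fin 2,
      twoSiteOp N (k+1) h2 M α β * Lloc N k h T β γ
      = (fun u v (β' : Fin N → Fin 2) =>
          M (α ⟨k+1, by omega⟩, α ⟨k+1+1, h⟩) (u,v) *
            (T (β' ⟨k, by omega⟩) u v (γ ⟨k, hk2⟩) *
              ∏ j ∈ Finset.univ.erase (⟨k, hk2⟩ : Fin (N-2)),
                (if β' (insIdx N k j) = γ j then (1:ℂ) else 0)))
          (β ⟨k+1, by omega⟩) (β ⟨k+1+1, h⟩) β *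
        ∏ j ∈ (Finset.univ.erase (⟨k+1, by omega⟩ : Fin N)).erase ⟨k+1+1, h⟩,
          (if α j = β j then (1:ℂ) else 0) := by
    intro β
    simp only [twoSiteOp, Lloc, Matrix.of_apply]
    ring
  have key := sumCollapse2 (⟨k+1, by omega⟩ : Fin N) ⟨k+1+1, h⟩
    (by simp only [ne_eq, Fin.mk.injEq]; omega) α
    (fun u v (β' : Fin N → Fin 2) =>
          M (α ⟨k+1, by omega⟩, α ⟨k+1+1, h⟩) (u,v) *
            (T (β' ⟨k, by omega⟩) u v (γ ⟨k, hk2⟩) *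
              ∏ j ∈ Finset.univ.erase (⟨k, hk2⟩ : Fin (N-2)),
                (if β' (insIdx N k j) = γ j then (1:ℂ) else 0)))
    (by
      intro u v β hβ
      have e2 : β ⟨k, by omega⟩ = α ⟨k, by omega⟩ :=
        hβ _ (by simp only [ne_eq, Fin.mk.injEq]; omega)
          (by simp only [ne_eq, Fin.mk.injEq]; omega)
      rw [e2, Finset.prod_congr rfl (fun j hj => by
        have hjk : j.1 ≠ k := fun hc => (Finset.mem_erase.1 hj).1 (Fin.ext hc)
        rw [hβ _ (insIdx_ne j hjk (k+1) (by omega) (by omega) _)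
          (insIdx_ne j hjk (k+1+1) (by omega) (by omega) _)])])
  rw [Finset.sum_congr rfl (fun β _ => step1 β), key]
  simp only [Lloc, Matrix.of_apply]
  rw [Finset.sum_mul]
  refine Finset.sum_congr rfl fun u _ => ?_
  rw [Finset.sum_mul]
  exact Finset.sum_congr rfl fun v _ => by ring

/-- **Lemma 2.1.** For `N ≥ 3` and `2 ≤ i ≤ N−1` (1-based sites, so 0-based
positions `i−1` and `i−2`), one has
`Ř_{i,i+1}(qz) Ř_{i−1,i}(z) Ξ_N^i = −([q²z]/[q/z]) Ξ_N^{i−1}` and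
`Ř_{i−1,i}(qz) Ř_{i,i+1}(z) Ξ_N^{i−1} = −([q²z]/[q/z]) Ξ_N^i`. -/
theorem action_R_on_Xi (N i : ℕ) (hN : 3 ≤ N) (hi1 : 2 ≤ i) (hi2 : i ≤ N - 1)
    (q z : ℂ) (hq : q ≠ 0) (hz : z ≠ 0) (hz1 : z^2 ≠ 1) (hzq : z^2 ≠ q^2) :
    twoSiteOp N (i-1) (by omega) (Rhat q (q*z)) *
        (twoSiteOp N (i-2) (by omega) (Rhat q z) * Xi N (i-1) (by omega))
      = (-(cb (q^2*z) / cb (q/z))) • Xi N (i-2) (by omega)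
    ∧ twoSiteOp N (i-2) (by omega) (Rhat q (q*z)) *
        (twoSiteOp N (i-1) (by omega) (Rhat q z) * Xi N (i-2) (by omega))
      = (-(cb (q^2*z) / cb (q/z))) • Xi N (i-1) (by omega) := by
  obtain ⟨k, rfl⟩ : ∃ k, i = k + 2 := ⟨i - 2, by omega⟩
  have h : k + 1 + 1 < N := by omega
  constructor
  · show twoSiteOp N (k+1) (by omega) (Rhat q (q*z)) *
        (twoSiteOp N k (by omega) (Rhat q z) * Xi N (k+1) (by omega))
      = (-(cb (q^2*z) / cb (q/z))) • Xi N k (by omega)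
    rw [Xi_succ_eq N k h (by omega), mul_low N k h (by omega) (Rhat q z) _,
        mul_high N k h (by omega) (Rhat q (q*z)) _,
        Xi_self_eq N k h (by omega), smul_Lloc]
    refine congrArg (Lloc N k h) ?_
    funext a b c d
    exact key1 hq hz hz1 hzq a b c d
  · show twoSiteOp N k (by omega) (Rhat q (q*z)) *
        (twoSiteOp N (k+1) (by omega) (Rhat q z) * Xi N k (by omega))
      = (-(cb (q^2*z) / cb (q/z))) • Xi N (k+1) (by omega)
    rw [Xi_self_eq N k h (by omega), mul_high N k h (by omega) (Rhat q z) _,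
        mul_low N k h (by omega) (Rhat q (q*z)) _,
        Xi_succ_eq N k h (by omega), smul_Lloc]
    refine congrArg (Lloc N k h) ?_
    funext a b c d
    exact key2 hq hz hz1 hzq a b c d

end
end

section
/- Let U = ℂ ∖ (−∞, 0], with all powers z^{1/2}, z^{3/2}, z^{5/2} taken as principal branches on U. (a) If τ₁, τ₂ : U → ℂ are differentiable, τ₁′(z) = 0 and τ₂′(z) − τ₁′(z)τ₁(z) + (5/96)·(z³−1)/z^{5/2} = 0 for all z ∈ U, and τ₁(1) = τ₂(1) = 0, then τ₁(z) = 0 and τ₂(z) = −(5/144)·(z^{3/2}−1)²/z^{3/2} for all z ∈ U. (b) If τ̄₂ : U → ℂ is differentiable with τ̄₂′(z) = (7/96)·(z³−1)/z^{5/2} for all z ∈ U and τ̄₂(1) = 0, then τ̄₂(z) = (7/144)·(z^{3/2}−1)²/z^{3/2} for all z ∈ U. -/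
noncomputable section

/-- Constancy on the slit plane from vanishing derivative, via star convexity at `1`. -/
lemma tau_aux_const (f : ℂ → ℂ) (hf : ∀ z ∈ Complex.slitPlane, HasDerivAt f 0 z)
    {z : ℂ} (hz : z ∈ Complex.slitPlane) : f z = f 1 := by
  set φ : ℝ → ℂ := fun t => f (1 + t • (z - 1)) with hφ
  have hmem : ∀ t ∈ Set.Icc (0:ℝ) 1, (1 + t • (z - 1) : ℂ) ∈ Complex.slitPlane := by
    intro t ht
    have := Complex.starConvex_one_slitPlane hz (a := 1 - t) (b := t)
      (by linarith [ht.2]) ht.1 (by ring)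
    convert this using 1
    simp only [smul_eq_mul, Complex.real_smul]
    push_cast
    ring
  have hline : ∀ t : ℝ, HasDerivAt (fun t : ℝ => (1:ℂ) + t • (z - 1)) (z - 1) t := by
    intro t
    simpa using ((hasDerivAt_id t).smul_const (z - 1)).const_add (1 : ℂ)
  have hd : ∀ t ∈ Set.Icc (0:ℝ) 1, HasDerivAt φ 0 t := by
    intro t ht
    have := (hf _ (hmem t ht)).scomp t (hline t)
    simp at this; exact this
  have hcont : ContinuousOn φ (Set.Icc 0 1) := fun t ht => (hd t ht).continuousAt.continuousWithinAt
  have := constant_of_has_deriv_right_zero hcont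
    (fun t ht => (hd t (Set.mem_Icc_of_Ico ht)).hasDerivWithinAt) 1 (by norm_num)
  simpa [hφ] using this

lemma tau_aux_deriv (c : ℂ) {z : ℂ} (hz : z ∈ Complex.slitPlane) :
    HasDerivAt (fun z : ℂ => c * (z ^ ((3:ℂ)/2) - 1)^2 / z ^ ((3:ℂ)/2))
      (3 * c / 2 * (z^3 - 1) / z ^ ((5:ℂ)/2)) z := by
  have hz0 : z ≠ 0 := Complex.slitPlane_ne_zero hz
  have hp : HasDerivAt (fun z : ℂ => z ^ ((3:ℂ)/2)) ((3:ℂ)/2 * z ^ ((1:ℂ)/2)) z := by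
    have h := (Complex.hasStrictDerivAt_cpow_const (c := (3:ℂ)/2) hz).hasDerivAt
    rw [show (3:ℂ)/2 - 1 = 1/2 by norm_num] at h
    exact h
  have hw0 : z ^ ((1:ℂ)/2) ≠ 0 := by
    simp [Complex.cpow_eq_zero_iff, hz0]
  have hp0 : z ^ ((3:ℂ)/2) ≠ 0 := by
    simp [Complex.cpow_eq_zero_iff, hz0]
  have e1 : z ^ ((1:ℂ)/2) * z ^ ((1:ℂ)/2) = z := by
    rw [← Complex.cpow_add _ _ hz0]; norm_num
  have e2 : z ^ ((3:ℂ)/2) = z ^ ((1:ℂ)/2) * z := by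
    rw [show ((3:ℂ)/2) = (1:ℂ)/2 + 1 by norm_num, Complex.cpow_add _ _ hz0, Complex.cpow_one]
  have e3 : z ^ ((5:ℂ)/2) = z ^ ((1:ℂ)/2) * z ^ 2 := by
    rw [show ((5:ℂ)/2) = (1:ℂ)/2 + 2 by norm_num, Complex.cpow_add _ _ hz0]
    norm_num [Complex.cpow_natCast]
  have hu : HasDerivAt (fun z : ℂ => c * (z ^ ((3:ℂ)/2) - 1)^2)
      (c * (↑2 * (z ^ ((3:ℂ)/2) - 1) ^ 1 * ((3:ℂ)/2 * z ^ ((1:ℂ)/2)))) z := by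
    simpa [mul_comm, mul_assoc, mul_left_comm] using (((hp.sub_const 1).pow 2).const_mul c)
  have hq := hu.div hp hp0
  refine hq.congr_deriv ?_
  set w := z ^ ((1:ℂ)/2) with hw
  rw [e3, e2, ← e1]
  field_simp
  ring

/-- For a fixed constant, the antiderivative identity on the slit plane. -/
lemma tau_aux_main (c : ℂ) (f : ℂ → ℂ)
    (hdiff : ∀ z ∈ Complex.slitPlane, DifferentiableAt ℂ f z)
    (hder : ∀ z ∈ Complex.slitPlane, deriv f z = 3 * c / 2 * (z^3 - 1) / z ^ ((5:ℂ)/2))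
    (h1 : f 1 = 0) :
    ∀ z ∈ Complex.slitPlane, f z = c * (z ^ ((3:ℂ)/2) - 1)^2 / z ^ ((3:ℂ)/2) := by
  intro z hz
  set g : ℂ → ℂ := fun z => f z - c * (z ^ ((3:ℂ)/2) - 1)^2 / z ^ ((3:ℂ)/2) with hg
  have hkey : ∀ z ∈ Complex.slitPlane, HasDerivAt g 0 z := by
    intro z hz
    have hf : HasDerivAt f (3 * c / 2 * (z^3 - 1) / z ^ ((5:ℂ)/2)) z := by
      have := (hdiff z hz).hasDerivAt
      rwa [hder z hz] at this
    have h2 := hf.sub (tau_aux_deriv c hz)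
    simp at h2; exact h2
  have := tau_aux_const g hkey hz
  have hg1 : g 1 = 0 := by simp [hg, h1, Complex.one_cpow]
  rw [hg1] at this
  simp only [hg] at this
  linear_combination this


/-- **Lemma 4.4.** Determination of the subleading coefficients `τ₁, τ₂`
(part (a)) and `τ̄₂` (part (b)) on the slit plane `U = ℂ ∖ (−∞, 0]`, with all
fractional powers taken as principal branches. -/
theorem tau_coefficients :
    (∀ τ₁ τ₂ : ℂ → ℂ,
      (∀ z ∈ Complex.slitPlane, DifferentiableAt ℂ τ₁ z) →
      (∀ z ∈ Complex.slitPlane, DifferentiableAt ℂ τ₂ z) →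
      (∀ z ∈ Complex.slitPlane, deriv τ₁ z = 0) →
      (∀ z ∈ Complex.slitPlane,
        deriv τ₂ z - deriv τ₁ z * τ₁ z + (5/96) * (z^3 - 1) / z ^ ((5:ℂ)/2) = 0) →
      τ₁ 1 = 0 → τ₂ 1 = 0 →
      ∀ z ∈ Complex.slitPlane,
        τ₁ z = 0 ∧ τ₂ z = -(5/144) * (z ^ ((3:ℂ)/2) - 1)^2 / z ^ ((3:ℂ)/2))
    ∧ (∀ τ₂' : ℂ → ℂ,
      (∀ z ∈ Complex.slitPlane, DifferentiableAt ℂ τ₂' z) →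
      (∀ z ∈ Complex.slitPlane,
        deriv τ₂' z = (7/96) * (z^3 - 1) / z ^ ((5:ℂ)/2)) →
      τ₂' 1 = 0 →
      ∀ z ∈ Complex.slitPlane,
        τ₂' z = (7/144) * (z ^ ((3:ℂ)/2) - 1)^2 / z ^ ((3:ℂ)/2)) := by
  constructor
  · intro τ₁ τ₂ hd1 hd2 hder1 hder2 h11 h21 z hz
    have hτ₁ : ∀ z ∈ Complex.slitPlane, τ₁ z = 0 := by
      intro z hz
      have : τ₁ z = τ₁ 1 := by
        refine tau_aux_const τ₁ (fun w hw => ?_) hz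
        have := (hd1 w hw).hasDerivAt
        rwa [hder1 w hw] at this
      rw [this, h11]
    refine ⟨hτ₁ z hz, ?_⟩
    refine tau_aux_main (-(5/144)) τ₂ hd2 (fun w hw => ?_) h21 z hz
    have h := hder2 w hw
    rw [hder1 w hw] at h
    linear_combination h
  · intro τ₂' hd hder h1 z hz
    refine tau_aux_main (7/144) τ₂' hd (fun w hw => ?_) h1 z hz
    rw [hder w hw]
    ring

end
end

section
/- For even integers N1, N2 ≥ 2 with N = N1 + N2 and ξ = N1/N, define G(N1, N2) = −ln( γ_{N1} γ_{N2} γ_{N+1} / ( γ_{N1+1} γ_{N2+1} γ_N ) ), and let K = (8/(3Γ(1/3)))·√(π/3). Then for every δ ∈ (0, 1/2) there exist C > 0 and N₀ such that for all even N1, N2 ≥ 2 with N ≥ N₀ and δ ≤ ξ ≤ 1−δ, one has | G(N1, N2) − [ (1/6)·ln N + (1/6)·ln(ξ(1−ξ)) − ln K + (13/72)·(1/ξ + 1/(1−ξ) − 1)·N^{−1} ] | ≤ C·N^{−2}. -/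
set_option maxHeartbeats 1600000

open Real Filter Topology


noncomputable section

/-- `γ_N`: `A_V(N+1)` for `N` even, `N_8(N+1)` for `N` odd. -/
def gammaN (N : ℕ) : ℝ :=
  if N % 2 = 0 then
    ((2:ℝ)⁻¹) ^ (N/2) * ∏ i ∈ Finset.Icc 1 (N/2),
      ((Nat.factorial (6*i-2) : ℝ) * (Nat.factorial (2*i-1) : ℝ)) /
        ((Nat.factorial (4*i-2) : ℝ) * (Nat.factorial (4*i-1) : ℝ))
  else
    ∏ i ∈ Finset.range ((N+1)/2),
      (((3*i+1 : ℕ) : ℝ) * (Nat.factorial (6*i) : ℝ) * (Nat.factorial (2*i) : ℝ)) /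
        ((Nat.factorial (4*i) : ℝ) * (Nat.factorial (4*i+1) : ℝ))

/-- The supersymmetric-point LBF `G(N1,N2) = −ln(γ_{N1} γ_{N2} γ_{N+1} /
(γ_{N1+1} γ_{N2+1} γ_N))`. -/
def Gsusy (N1 N2 : ℕ) : ℝ :=
  -Real.log (gammaN N1 * gammaN N2 * gammaN (N1+N2+1) /
    (gammaN (N1+1) * gammaN (N2+1) * gammaN (N1+N2)))

/-- The constant `K = (8/(3Γ(1/3)))·√(π/3)`. -/
def Ksusy : ℝ := 8/(3 * Real.Gamma (1/3)) * Real.sqrt (Real.pi/3)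

def Aterm (i : ℕ) : ℝ :=
  ((Nat.factorial (6*i-2) : ℝ) * (Nat.factorial (2*i-1) : ℝ)) /
    ((Nat.factorial (4*i-2) : ℝ) * (Nat.factorial (4*i-1) : ℝ))

def Bterm (i : ℕ) : ℝ :=
  (((3*i+1 : ℕ) : ℝ) * (Nat.factorial (6*i) : ℝ) * (Nat.factorial (2*i) : ℝ)) /
    ((Nat.factorial (4*i) : ℝ) * (Nat.factorial (4*i+1) : ℝ))

def qterm (i : ℕ) : ℝ :=
  ((i:ℝ)+4/3)*((i:ℝ)+5/6)/(((i:ℝ)+3/4)*((i:ℝ)+5/4))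

def Qprod (k : ℕ) : ℝ := ∏ i ∈ Finset.range k, qterm i

lemma qterm_pos (i : ℕ) : 0 < qterm i := by
  unfold qterm; positivity

lemma Qprod_pos (k : ℕ) : 0 < Qprod k :=
  Finset.prod_pos fun i _ => qterm_pos i

lemma gammaN_even (k : ℕ) : gammaN (2*k) = ((2:ℝ)⁻¹)^k * ∏ i ∈ Finset.Icc 1 k, Aterm i := by
  have h1 : (2*k) % 2 = 0 := Nat.mul_mod_right 2 k
  have h2 : (2*k)/2 = k := by omega
  rw [gammaN, if_pos h1, h2]; rfl

lemma gammaN_odd (k : ℕ) : gammaN (2*k+1) = ∏ i ∈ Finset.range (k+1), Bterm i := by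
  have h1 : ¬((2*k+1) % 2 = 0) := by omega
  have h2 : (2*k+1+1)/2 = k+1 := by omega
  rw [gammaN, if_neg h1, h2]; rfl

lemma Aterm_pos (i : ℕ) : 0 < Aterm i := by
  unfold Aterm
  have := Nat.factorial_pos (6*i-2)
  have := Nat.factorial_pos (2*i-1)
  have := Nat.factorial_pos (4*i-2)
  have := Nat.factorial_pos (4*i-1)
  positivity

lemma gammaN_even_pos (k : ℕ) : 0 < gammaN (2*k) := by
  rw [gammaN_even]
  have : 0 < ∏ i ∈ Finset.Icc 1 k, Aterm i := Finset.prod_pos fun i _ => Aterm_pos i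
  positivity

lemma Bterm_succ (k : ℕ) : Bterm (k+1) = 2⁻¹ * Aterm (k+1) * (27/16) * qterm k := by
  have e1 : 6*(k+1) = (6*k+5)+1 := by ring
  have e2 : 6*(k+1)-2 = 6*k+4 := by omega
  have e3 : 2*(k+1) = (2*k+1)+1 := by ring
  have e4 : 2*(k+1)-1 = 2*k+1 := by omega
  have e5 : 4*(k+1) = (4*k+3)+1 := by ring
  have e6 : 4*(k+1)-2 = 4*k+2 := by omega
  have e7 : 4*(k+1)-1 = 4*k+3 := by omega
  have e8 : 4*(k+1)+1 = (4*k+4)+1 := by ring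
  have e9 : 3*(k+1)+1 = 3*k+4 := by ring
  rw [Bterm, Aterm, e2, e4, e6, e7, e8, e9, e1, e3, e5]
  rw [Nat.factorial_succ (6*k+5), Nat.factorial_succ (6*k+4), Nat.factorial_succ (4*k+3),
    Nat.factorial_succ (4*k+4), Nat.factorial_succ (4*k+3), Nat.factorial_succ (2*k+1),
    Nat.factorial_succ (4*k+2), qterm]
  have f1 : (Nat.factorial (6*k+4) : ℝ) ≠ 0 := Nat.cast_ne_zero.2 (Nat.factorial_pos _).ne'
  have f2 : (Nat.factorial (2*k+1) : ℝ) ≠ 0 := Nat.cast_ne_zero.2 (Nat.factorial_pos _).ne'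
  have f3 : (Nat.factorial (4*k+2) : ℝ) ≠ 0 := Nat.cast_ne_zero.2 (Nat.factorial_pos _).ne'
  have p1 : ((k:ℝ)+3/4) ≠ 0 := by positivity
  have p2 : ((k:ℝ)+5/4) ≠ 0 := by positivity
  have n1 : ((4*k+4 : ℕ):ℝ) ≠ 0 := by positivity
  have n2 : ((4*k+3 : ℕ):ℝ) ≠ 0 := by positivity
  have n3 : ((4*k+5 : ℕ):ℝ) ≠ 0 := by positivity
  push_cast
  field_simp
  ring

lemma gamma_ratio (k : ℕ) :
    gammaN (2*k+1) = gammaN (2*k) * (27/16)^k * Qprod k := by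
  induction k with
  | zero =>
    show gammaN (2*0+1) = _
    rw [gammaN_odd, gammaN_even]
    norm_num [Qprod, Bterm, Nat.factorial]
  | succ k ih =>
    have h1 : 2*(k+1)+1 = (2*k+1)+1+1 := by ring
    have h2 : gammaN (2*(k+1)+1) = gammaN (2*k+1) * Bterm (k+1) := by
      rw [gammaN_odd (k+1), gammaN_odd k, Finset.prod_range_succ]
    have h3 : gammaN (2*(k+1)) = gammaN (2*k) * (2⁻¹ * Aterm (k+1)) := by
      rw [gammaN_even (k+1), gammaN_even k, Finset.prod_Icc_succ_top (by omega : 1 ≤ k+1)]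
      ring
    rw [h2, ih, h3, Bterm_succ, show Qprod (k+1) = Qprod k * qterm k from Finset.prod_range_succ _ k]
    ring


lemma log_approx {u : ℝ} (h : |u| ≤ 2/3) : |Real.log (1+u) - u + u^2/2| ≤ 3*|u|^3 := by
  have h1 : |(-u)| < 1 := by rw [abs_neg]; linarith [abs_nonneg u]
  have h0 := Real.abs_log_sub_add_sum_range_le h1 2
  simp only [Finset.sum_range_succ, Finset.sum_range_zero] at h0
  norm_num at h0
  have h4 : |u|^3/(1-|u|) ≤ 3*|u|^3 := by
    rw [div_le_iff₀ (by linarith [abs_nonneg u])]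
    nlinarith [mul_nonneg (pow_nonneg (abs_nonneg u) 3) (by linarith : (0:ℝ) ≤ 2-3*|u|)]
  calc |Real.log (1+u) - u + u^2/2| = |(-u + u^2/2) + Real.log (1+u)| := by ring_nf
    _ ≤ |u|^3/(1-|u|) := h0
    _ ≤ 3*|u|^3 := h4

lemma step_bound (k : ℕ) (hk : 2 ≤ k) :
    |Real.log (qterm k) - (1/6)*(Real.log ((k:ℝ)+1) - Real.log (k:ℝ))
      + 13/(144*((k:ℝ)*((k:ℝ)+1)))| ≤ 20*(((k:ℝ)^3)⁻¹) := by
  have hx : (2:ℝ) ≤ (k:ℝ) := by exact_mod_cast hk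
  set x : ℝ := (k:ℝ) with hxdef
  have hx0 : (0:ℝ) < x := by linarith
  have hxne : x ≠ 0 := ne_of_gt hx0
  have hx1 : x + 1 ≠ 0 := by positivity
  have p1 : (0:ℝ) < 1+(4/3)/x := by positivity
  have p2 : (0:ℝ) < 1+(5/6)/x := by positivity
  have p3 : (0:ℝ) < 1+(3/4)/x := by positivity
  have p4 : (0:ℝ) < 1+(5/4)/x := by positivity
  have hlog : Real.log (qterm k)
      = Real.log (1+(4/3)/x) + Real.log (1+(5/6)/x)
        - (Real.log (1+(3/4)/x) + Real.log (1+(5/4)/x)) := by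
    have e1 : x + 4/3 = x*(1+(4/3)/x) := by field_simp
    have e2 : x + 5/6 = x*(1+(5/6)/x) := by field_simp
    have e3 : x + 3/4 = x*(1+(3/4)/x) := by field_simp
    have e4 : x + 5/4 = x*(1+(5/4)/x) := by field_simp
    unfold qterm
    rw [← hxdef, e1, e2, e3, e4,
      Real.log_div (by positivity) (by positivity),
      Real.log_mul (mul_ne_zero hxne p1.ne') (mul_ne_zero hxne p2.ne'),
      Real.log_mul (mul_ne_zero hxne p3.ne') (mul_ne_zero hxne p4.ne'),
      Real.log_mul hxne p1.ne', Real.log_mul hxne p2.ne',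
      Real.log_mul hxne p3.ne', Real.log_mul hxne p4.ne']
    ring
  have hlog5 : Real.log (x+1) - Real.log x = Real.log (1+1/x) := by
    rw [← Real.log_div hx1 hxne]
    congr 1
    field_simp
  have habs : ∀ c : ℝ, 0 < c → c ≤ 4/3 → |c/x| ≤ 2/3 := by
    intro c hc hc2
    rw [abs_of_nonneg (by positivity), div_le_iff₀ hx0]
    nlinarith
  have bnd : ∀ c : ℝ, 0 < c → c ≤ 4/3 →
      |Real.log (1+c/x) - c/x + (c/x)^2/2| ≤ (3*c^3)*((x^3)⁻¹) := by
    intro c hc hc2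
    calc |Real.log (1+c/x) - c/x + (c/x)^2/2| ≤ 3*|c/x|^3 := log_approx (habs c hc hc2)
      _ = (3*c^3)*((x^3)⁻¹) := by
          rw [abs_of_nonneg (by positivity), div_pow]
          ring
  have b1 := bnd (4/3) (by norm_num) (by norm_num)
  have b2 := bnd (5/6) (by norm_num) (by norm_num)
  have b3 := bnd (3/4) (by norm_num) (by norm_num)
  have b4 := bnd (5/4) (by norm_num) (by norm_num)
  have b5 := bnd 1 (by norm_num) (by norm_num)
  have key : Real.log (qterm k) - (1/6)*(Real.log (x+1) - Real.log x)
      + 13/(144*(x*(x+1)))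
      = (Real.log (1+(4/3)/x) - (4/3)/x + ((4/3)/x)^2/2)
        + (Real.log (1+(5/6)/x) - (5/6)/x + ((5/6)/x)^2/2)
        - (Real.log (1+(3/4)/x) - (3/4)/x + ((3/4)/x)^2/2)
        - (Real.log (1+(5/4)/x) - (5/4)/x + ((5/4)/x)^2/2)
        - (1/6)*(Real.log (1+1/x) - 1/x + (1/x)^2/2)
        - 13/144*((x^2*(x+1))⁻¹) := by
    rw [hlog, hlog5]
    have h9 : 13/(144*(x*(x+1)))
        = - ((4/3)/x + (5/6)/x - (3/4)/x - (5/4)/x - (1/6)*(1/x))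
          + (((4/3)/x)^2/2 + ((5/6)/x)^2/2 - ((3/4)/x)^2/2 - ((5/4)/x)^2/2
            - (1/6)*((1/x)^2/2)) - 13/144*((x^2*(x+1))⁻¹) := by
      field_simp
      ring
    rw [h9]
    ring
  rw [key]
  have t6pos : (0:ℝ) < (x^2*(x+1))⁻¹ := by positivity
  have t6le : (x^2*(x+1))⁻¹ ≤ (x^3)⁻¹ := by
    apply inv_anti₀ (by positivity)
    nlinarith
  have i1 := abs_le.1 b1
  have i2 := abs_le.1 b2
  have i3 := abs_le.1 b3
  have i4 := abs_le.1 b4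
  have i5 := abs_le.1 b5
  have hx3 : (0:ℝ) < (x^3)⁻¹ := by positivity
  rw [abs_le]
  constructor <;>
    linarith [i1.1, i1.2, i2.1, i2.2, i3.1, i3.2, i4.1, i4.2, i5.1, i5.2, t6le, t6pos, hx3]


def Eseq (k : ℕ) : ℝ := Real.log (Qprod k) - (1/6)*Real.log (k:ℝ) - 13/(144*(k:ℝ))

lemma Eseq_succ (k : ℕ) (hk : 1 ≤ k) :
    Eseq (k+1) - Eseq k
      = Real.log (qterm k) - (1/6)*(Real.log ((k:ℝ)+1) - Real.log (k:ℝ))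
        + 13/(144*((k:ℝ)*((k:ℝ)+1))) := by
  have hQ : Qprod (k+1) = Qprod k * qterm k := Finset.prod_range_succ _ k
  have hk0 : (0:ℝ) < (k:ℝ) := by exact_mod_cast hk
  unfold Eseq
  rw [hQ, Real.log_mul (Qprod_pos k).ne' (qterm_pos k).ne']
  push_cast
  have h1 : (k:ℝ) ≠ 0 := hk0.ne'
  have h2 : (k:ℝ)+1 ≠ 0 := by positivity
  field_simp
  ring

lemma Eseq_diff_bound (k : ℕ) (hk : 2 ≤ k) :
    ∀ m : ℕ, k ≤ m → |Eseq m - Eseq k|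
      ≤ 20*((((k:ℝ)-1)*(k:ℝ))⁻¹ - (((m:ℝ)-1)*(m:ℝ))⁻¹) := by
  intro m hm
  induction m, hm using Nat.le_induction with
  | base => simp
  | succ m hm ih =>
    have hm2 : 2 ≤ m := le_trans hk hm
    have hy : (2:ℝ) ≤ (m:ℝ) := by exact_mod_cast hm2
    have hy0 : (m:ℝ) ≠ 0 := by positivity
    have hy1 : (m:ℝ) - 1 ≠ 0 := by intro h; nlinarith
    have hy2 : (m:ℝ) + 1 ≠ 0 := by positivity
    have hstep : |Eseq (m+1) - Eseq m| ≤ 20*(((m:ℝ)^3)⁻¹) := by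
      rw [Eseq_succ m (by omega)]
      exact step_bound m hm2
    have tri : |Eseq (m+1) - Eseq k| ≤ |Eseq (m+1) - Eseq m| + |Eseq m - Eseq k| := by
      calc |Eseq (m+1) - Eseq k| = |(Eseq (m+1) - Eseq m) + (Eseq m - Eseq k)| := by ring_nf
        _ ≤ _ := abs_add_le _ _
    have hkey : (((m:ℝ))^3)⁻¹ ≤ (((m:ℝ)-1)*(m:ℝ))⁻¹ - ((((m:ℝ)+1)-1)*((m:ℝ)+1))⁻¹ := by
      have h1 : (((m:ℝ)-1)*(m:ℝ))⁻¹ - ((((m:ℝ)+1)-1)*((m:ℝ)+1))⁻¹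
          = 2 / (((m:ℝ)-1)*((m:ℝ)*((m:ℝ)+1))) := by
        rw [add_sub_cancel_right]
        field_simp
        ring
      have hm1 : (0:ℝ) < (m:ℝ) - 1 := by linarith
      rw [h1, inv_eq_one_div, div_le_div_iff₀ (by positivity)
        (mul_pos hm1 (mul_pos (by linarith) (by linarith)))]
      nlinarith [pow_nonneg (by linarith : (0:ℝ) ≤ (m:ℝ)) 3]
    have goalcast : ((m+1:ℕ):ℝ) = (m:ℝ)+1 := by push_cast; ring
    rw [goalcast]
    linarith [tri, hstep, ih, hkey]


def Vval : ℝ := Real.Gamma (3/4) * Real.Gamma (5/4) / (Real.Gamma (4/3) * Real.Gamma (5/6))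

lemma Pprod_pos (x : ℝ) (hx : 0 < x) (n : ℕ) : 0 < ∏ j ∈ Finset.range (n+1), (x + (j:ℝ)) :=
  Finset.prod_pos fun j _ => by positivity

lemma GammaSeq_pos (x : ℝ) (hx : 0 < x) (n : ℕ) (hn : 1 ≤ n) : 0 < Real.GammaSeq x n := by
  rw [Real.GammaSeq]
  have h0 : (0:ℝ) < (n:ℝ) := by exact_mod_cast hn
  have := Pprod_pos x hx n
  have := n.factorial_pos
  positivity

lemma Q_ratio (n : ℕ) (hn : 1 ≤ n) :
    Qprod (n+1) * (Real.GammaSeq (4/3) n * Real.GammaSeq (5/6) n)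
      = (n:ℝ)^((1:ℝ)/6) * (Real.GammaSeq (3/4) n * Real.GammaSeq (5/4) n) := by
  have h0 : (0:ℝ) < (n:ℝ) := by exact_mod_cast hn
  have hq : Qprod (n+1) = ∏ i ∈ Finset.range (n+1),
      ((4/3 + (i:ℝ))*(5/6 + (i:ℝ))/((3/4 + (i:ℝ))*(5/4 + (i:ℝ)))) :=
    Finset.prod_congr rfl (fun i _ => by unfold qterm; ring)
  rw [hq, Finset.prod_div_distrib, Finset.prod_mul_distrib, Finset.prod_mul_distrib]
  rw [Real.GammaSeq, Real.GammaSeq, Real.GammaSeq, Real.GammaSeq]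
  have P1 := Pprod_pos (4/3) (by norm_num) n
  have P2 := Pprod_pos (5/6) (by norm_num) n
  have P3 := Pprod_pos (3/4) (by norm_num) n
  have P4 := Pprod_pos (5/4) (by norm_num) n
  have hf : (0:ℝ) < (n.factorial : ℝ) := by exact_mod_cast n.factorial_pos
  have key : (n:ℝ)^((1:ℝ)/6) * ((n:ℝ)^((3:ℝ)/4) * (n:ℝ)^((5:ℝ)/4))
      = (n:ℝ)^((4:ℝ)/3) * (n:ℝ)^((5:ℝ)/6) := by
    rw [← Real.rpow_add h0, ← Real.rpow_add h0, ← Real.rpow_add h0]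
    norm_num
  set p1 := ∏ j ∈ Finset.range (n+1), ((4:ℝ)/3 + (j:ℝ)) with hp1
  set p2 := ∏ j ∈ Finset.range (n+1), ((5:ℝ)/6 + (j:ℝ)) with hp2
  set p3 := ∏ j ∈ Finset.range (n+1), ((3:ℝ)/4 + (j:ℝ)) with hp3
  set p4 := ∏ j ∈ Finset.range (n+1), ((5:ℝ)/4 + (j:ℝ)) with hp4
  set r1 := (n:ℝ)^((4:ℝ)/3)
  set r2 := (n:ℝ)^((5:ℝ)/6)
  set r3 := (n:ℝ)^((3:ℝ)/4)
  set r4 := (n:ℝ)^((5:ℝ)/4)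
  set r5 := (n:ℝ)^((1:ℝ)/6)
  have e1 : p1 ≠ 0 := P1.ne'
  have e2 : p2 ≠ 0 := P2.ne'
  have e3 : p3 ≠ 0 := P3.ne'
  have e4 : p4 ≠ 0 := P4.ne'
  field_simp
  linear_combination (-1) * key

lemma log_Vval : Real.log Vval
    = Real.log (Real.Gamma (3/4)) + Real.log (Real.Gamma (5/4))
      - Real.log (Real.Gamma (4/3)) - Real.log (Real.Gamma (5/6)) := by
  have g1 := Real.Gamma_pos_of_pos (show (0:ℝ) < 3/4 by norm_num)
  have g2 := Real.Gamma_pos_of_pos (show (0:ℝ) < 5/4 by norm_num)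
  have g3 := Real.Gamma_pos_of_pos (show (0:ℝ) < 4/3 by norm_num)
  have g4 := Real.Gamma_pos_of_pos (show (0:ℝ) < 5/6 by norm_num)
  unfold Vval
  rw [Real.log_div (by positivity) (by positivity), Real.log_mul g1.ne' g2.ne',
    Real.log_mul g3.ne' g4.ne']
  ring

lemma tendsto_Eseq : Tendsto Eseq atTop (𝓝 (Real.log Vval)) := by
  have tG : ∀ x : ℝ, 0 < x → Tendsto (fun n : ℕ => Real.log (Real.GammaSeq x n)) atTop
      (𝓝 (Real.log (Real.Gamma x))) := fun x hx =>
    ((Real.continuousAt_log (Real.Gamma_pos_of_pos hx).ne').tendsto).comp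
      (Real.GammaSeq_tendsto_Gamma x)
  have hW : Tendsto (fun n : ℕ =>
      Real.log (Real.GammaSeq (3/4) n) + Real.log (Real.GammaSeq (5/4) n)
        - Real.log (Real.GammaSeq (4/3) n) - Real.log (Real.GammaSeq (5/6) n)) atTop
      (𝓝 (Real.log Vval)) := by
    rw [log_Vval]
    exact (((tG (3/4) (by norm_num)).add (tG (5/4) (by norm_num))).sub
      (tG (4/3) (by norm_num))).sub (tG (5/6) (by norm_num))
  have hF : Tendsto (fun n : ℕ => Real.log (Qprod (n+1)) - (1/6)*Real.log (n:ℝ)) atTop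
      (𝓝 (Real.log Vval)) := by
    apply hW.congr'
    filter_upwards [eventually_ge_atTop 1] with n hn
    have h0 : (0:ℝ) < (n:ℝ) := by exact_mod_cast hn
    have G1 := GammaSeq_pos (4/3) (by norm_num) n hn
    have G2 := GammaSeq_pos (5/6) (by norm_num) n hn
    have G3 := GammaSeq_pos (3/4) (by norm_num) n hn
    have G4 := GammaSeq_pos (5/4) (by norm_num) n hn
    have hQR := Q_ratio n hn
    have := congrArg Real.log hQR
    rw [Real.log_mul (Qprod_pos (n+1)).ne' (mul_pos G1 G2).ne',
      Real.log_mul (Real.rpow_pos_of_pos h0 _).ne' (mul_pos G3 G4).ne',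
      Real.log_mul G1.ne' G2.ne', Real.log_mul G3.ne' G4.ne',
      Real.log_rpow h0] at this
    linarith
  have hA : Tendsto (fun n : ℕ => Real.log ((n:ℝ)+1) - Real.log (n:ℝ)) atTop (𝓝 0) := by
    have h1 : Tendsto (fun n : ℕ => 1 + 1/(n:ℝ)) atTop (𝓝 (1+0)) :=
      tendsto_const_nhds.add tendsto_one_div_atTop_nhds_zero_nat
    rw [add_zero] at h1
    have h2 : Tendsto (fun n : ℕ => Real.log (1 + 1/(n:ℝ))) atTop (𝓝 (Real.log 1)) :=
      ((Real.continuousAt_log one_ne_zero).tendsto).comp h1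
    rw [Real.log_one] at h2
    apply h2.congr'
    filter_upwards [eventually_ge_atTop 1] with n hn
    have h0 : (0:ℝ) < (n:ℝ) := by exact_mod_cast hn
    rw [← Real.log_div (by positivity) h0.ne']
    congr 1
    field_simp
  have hB : Tendsto (fun n : ℕ => 13/(144*((n:ℝ)+1))) atTop (𝓝 0) := by
    have h1 := tendsto_one_div_add_atTop_nhds_zero_nat.const_mul (13/144 : ℝ)
    rw [mul_zero] at h1
    apply h1.congr
    intro n
    rw [mul_comm, div_mul_div_comm]
    ring_nf
  have hEshift : Tendsto (fun n : ℕ => Eseq (n+1)) atTop (𝓝 (Real.log Vval)) := by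
    have heq : ∀ n : ℕ, Eseq (n+1)
        = (Real.log (Qprod (n+1)) - (1/6)*Real.log (n:ℝ))
          - (1/6)*(Real.log ((n:ℝ)+1) - Real.log (n:ℝ)) - 13/(144*((n:ℝ)+1)) := by
      intro n
      unfold Eseq
      push_cast
      ring
    have htend := ((hF.sub (hA.const_mul (1/6 : ℝ))).sub hB)
    rw [mul_zero, sub_zero, sub_zero] at htend
    apply htend.congr
    intro n
    rw [heq n]
  exact (tendsto_add_atTop_iff_nat 1).mp hEshift

lemma Eseq_bound (k : ℕ) (hk : 2 ≤ k) :
    |Eseq k - Real.log Vval| ≤ 40*(((k:ℝ)^2)⁻¹) := by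
  have hkr : (2:ℝ) ≤ (k:ℝ) := by exact_mod_cast hk
  have h1 : Tendsto (fun m : ℕ => |Eseq m - Eseq k|) atTop (𝓝 |Real.log Vval - Eseq k|) :=
    (tendsto_Eseq.sub_const (Eseq k)).abs
  have h2 : ∀ᶠ m : ℕ in atTop, |Eseq m - Eseq k| ≤ 20*((((k:ℝ)-1)*(k:ℝ))⁻¹) := by
    filter_upwards [eventually_ge_atTop k] with m hm
    have hmr : (2:ℝ) ≤ (m:ℝ) := by
      have : 2 ≤ m := le_trans hk hm
      exact_mod_cast this
    have hpos : (0:ℝ) ≤ (((m:ℝ)-1)*(m:ℝ))⁻¹ := by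
      apply inv_nonneg.2
      nlinarith
    have := Eseq_diff_bound k hk m hm
    linarith
  have h3 : |Real.log Vval - Eseq k| ≤ 20*((((k:ℝ)-1)*(k:ℝ))⁻¹) := le_of_tendsto h1 h2
  have h4 : (((k:ℝ)-1)*(k:ℝ))⁻¹ ≤ 2*(((k:ℝ)^2)⁻¹) := by
    rw [show (2:ℝ)*(((k:ℝ)^2)⁻¹) = ((k:ℝ)^2/2)⁻¹ by rw [inv_div]; ring]
    apply inv_anti₀ (by positivity)
    nlinarith
  rw [abs_sub_comm]
  linarith


lemma Ksusy_pos : 0 < Ksusy := by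
  have g := Real.Gamma_pos_of_pos (show (0:ℝ) < 1/3 by norm_num)
  have := Real.pi_pos
  unfold Ksusy
  positivity

lemma Vval_mul_Ksusy : Vval * Ksusy = (2:ℝ)^((1:ℝ)/6) := by
  have pi0 := Real.pi_pos
  have g13 := Real.Gamma_pos_of_pos (show (0:ℝ) < 1/3 by norm_num)
  have g14 := Real.Gamma_pos_of_pos (show (0:ℝ) < 1/4 by norm_num)
  have g34 := Real.Gamma_pos_of_pos (show (0:ℝ) < 3/4 by norm_num)
  have g23 := Real.Gamma_pos_of_pos (show (0:ℝ) < 2/3 by norm_num)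
  have h43 : Real.Gamma (4/3) = (1/3) * Real.Gamma (1/3) := by
    rw [show (4:ℝ)/3 = 1/3 + 1 by norm_num, Real.Gamma_add_one (by norm_num)]
  have h54 : Real.Gamma (5/4) = (1/4) * Real.Gamma (1/4) := by
    rw [show (5:ℝ)/4 = 1/4 + 1 by norm_num, Real.Gamma_add_one (by norm_num)]
  have h1 : Real.Gamma (1/4) * Real.Gamma (3/4) = π / (Real.sqrt 2 / 2) := by
    have := Real.Gamma_mul_Gamma_one_sub (1/4)
    rw [show (1:ℝ) - 1/4 = 3/4 by norm_num, show π * (1/4) = π/4 by ring,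
      Real.sin_pi_div_four] at this
    exact this
  have h2 : Real.Gamma (1/3) * Real.Gamma (2/3) = π / (Real.sqrt 3 / 2) := by
    have := Real.Gamma_mul_Gamma_one_sub (1/3)
    rw [show (1:ℝ) - 1/3 = 2/3 by norm_num, show π * (1/3) = π/3 by ring,
      Real.sin_pi_div_three] at this
    exact this
  have h3 : Real.Gamma (1/3) * Real.Gamma (5/6)
      = Real.Gamma (2/3) * (2:ℝ)^((1:ℝ)/3) * Real.sqrt π := by
    have := Real.Gamma_mul_Gamma_add_half (1/3)
    rw [show (1:ℝ)/3 + 1/2 = 5/6 by norm_num, show (1:ℝ) - 2 * (1/3) = 1/3 by norm_num,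
      show (2:ℝ) * (1/3) = 2/3 by norm_num] at this
    exact this
  have h56 : Real.Gamma (5/6)
      = Real.Gamma (2/3) * (2:ℝ)^((1:ℝ)/3) * Real.sqrt π / Real.Gamma (1/3) := by
    field_simp [g13.ne'] at h3 ⊢
    linarith [h3]
  have hsqrt : Real.sqrt (π/3) = Real.sqrt π / Real.sqrt 3 := Real.sqrt_div pi0.le 3
  have s2 : (0:ℝ) < Real.sqrt 2 := Real.sqrt_pos.2 (by norm_num)
  have s3 : (0:ℝ) < Real.sqrt 3 := Real.sqrt_pos.2 (by norm_num)
  have sp : (0:ℝ) < Real.sqrt π := Real.sqrt_pos.2 pi0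
  have t3 : (0:ℝ) < (2:ℝ)^((1:ℝ)/3) := Real.rpow_pos_of_pos (by norm_num) _
  have t6 : (0:ℝ) < (2:ℝ)^((1:ℝ)/6) := Real.rpow_pos_of_pos (by norm_num) _
  have ht : Real.sqrt 2 * ((2:ℝ)^((1:ℝ)/3) * (2:ℝ)^((1:ℝ)/6)) = 2 := by
    rw [show Real.sqrt 2 = (2:ℝ)^((1:ℝ)/2) from Real.sqrt_eq_rpow 2,
      ← Real.rpow_add (by norm_num), ← Real.rpow_add (by norm_num)]
    norm_num
  have hs2 : Real.sqrt 2 * Real.sqrt 2 = 2 := Real.mul_self_sqrt (by norm_num)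
  have hs3 : Real.sqrt 3 * Real.sqrt 3 = 3 := Real.mul_self_sqrt (by norm_num)
  have h1'' : Real.Gamma (1/4) * Real.Gamma (3/4) = π * Real.sqrt 2 := by
    rw [h1, div_eq_iff (by positivity)]
    linear_combination (-π/2) * hs2
  have h2'' : Real.Gamma (1/3) * Real.Gamma (2/3) = 2*π*Real.sqrt 3/3 := by
    rw [h2, div_eq_iff (by positivity)]
    field_simp
    linear_combination (-1) * hs3
  have ht' : (2:ℝ)^((1:ℝ)/3) * (2:ℝ)^((1:ℝ)/6) = Real.sqrt 2 := by
    rw [show Real.sqrt 2 = (2:ℝ)^((1:ℝ)/2) from Real.sqrt_eq_rpow 2,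
      ← Real.rpow_add (by norm_num)]
    norm_num
  unfold Vval Ksusy
  rw [h43, h54, h56, hsqrt]
  field_simp
  linear_combination 8 * h1''
    + (-4*((2:ℝ)^((1:ℝ)/6))*((2:ℝ)^((1:ℝ)/3))*Real.sqrt 3) * h2''
    + (-8*((2:ℝ)^((1:ℝ)/6))*((2:ℝ)^((1:ℝ)/3))*π/3) * hs3
    + (-8*π) * ht'


lemma Gsusy_eq (k₁ k₂ : ℕ) :
    Gsusy (2*k₁) (2*k₂)
      = Real.log (Qprod k₁) + Real.log (Qprod k₂) - Real.log (Qprod (k₁+k₂)) := by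
  unfold Gsusy
  rw [show 2*k₁+2*k₂+1 = 2*(k₁+k₂)+1 by ring]
  rw [show 2*k₁+2*k₂ = 2*(k₁+k₂) by ring]
  rw [show 2*k₁+1 = 2*k₁+1 from rfl, gamma_ratio k₁, gamma_ratio k₂, gamma_ratio (k₁+k₂)]
  have g1 := gammaN_even_pos k₁
  have g2 := gammaN_even_pos k₂
  have g3 := gammaN_even_pos (k₁+k₂)
  have q1 := Qprod_pos k₁
  have q2 := Qprod_pos k₂
  have q3 := Qprod_pos (k₁+k₂)
  have p1 : (0:ℝ) < (27/16)^k₁ := by positivity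
  have p2 : (0:ℝ) < (27/16)^k₂ := by positivity
  have p3 : (0:ℝ) < (27/16)^(k₁+k₂) := by positivity
  have hX : gammaN (2*k₁) * gammaN (2*k₂) * (gammaN (2*(k₁+k₂)) * (27/16)^(k₁+k₂) * Qprod (k₁+k₂)) /
      (gammaN (2*k₁) * (27/16)^k₁ * Qprod k₁ * (gammaN (2*k₂) * (27/16)^k₂ * Qprod k₂) *
        gammaN (2*(k₁+k₂)))
      = Qprod (k₁+k₂) / (Qprod k₁ * Qprod k₂) := by
    rw [pow_add]
    field_simp
  rw [hX, Real.log_div q3.ne' (mul_pos q1 q2).ne', Real.log_mul q1.ne' q2.ne']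
  ring


/-- **Equation (84).** Asymptotics of the supersymmetric-point LBF for
`N1, N2` even, with error `O(N^{−2})` uniformly for `δ ≤ ξ ≤ 1−δ`. -/
theorem susy_lbf_asymptotics_even_even :
    ∀ δ ∈ Set.Ioo (0:ℝ) (1/2), ∃ C > (0:ℝ), ∃ N₀ : ℕ,
      ∀ N1 N2 : ℕ, Even N1 → Even N2 → 2 ≤ N1 → 2 ≤ N2 → N₀ ≤ N1 + N2 →
        δ ≤ (N1:ℝ)/((N1:ℝ)+N2) → (N1:ℝ)/((N1:ℝ)+N2) ≤ 1 - δ →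
        |Gsusy N1 N2
          - ((1/6) * Real.log ((N1:ℝ)+N2)
            + (1/6) * Real.log (((N1:ℝ)/((N1:ℝ)+N2)) * (1 - (N1:ℝ)/((N1:ℝ)+N2)))
            - Real.log Ksusy
            + (13/72) * (1/((N1:ℝ)/((N1:ℝ)+N2)) + 1/(1 - (N1:ℝ)/((N1:ℝ)+N2)) - 1)
                / ((N1:ℝ)+N2))|
        ≤ C / ((N1:ℝ)+N2)^2 := by
  rintro δ ⟨hδ0, hδh⟩
  refine ⟨480/δ^2, by positivity, ⌈(6:ℝ)/δ⌉₊, ?_⟩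
  intro N1 N2 hE1 hE2 hN1 hN2 hN₀ hξ1 hξ2
  obtain ⟨k₁, hk1⟩ := hE1
  obtain ⟨k₂, hk2⟩ := hE2
  have hN1e : N1 = 2*k₁ := by omega
  have hN2e : N2 = 2*k₂ := by omega
  subst hN1e
  subst hN2e
  have hk1p : 1 ≤ k₁ := by omega
  have hk2p : 1 ≤ k₂ := by omega
  have hx0 : (0:ℝ) < (k₁:ℝ) := by exact_mod_cast hk1p
  have hy0 : (0:ℝ) < (k₂:ℝ) := by exact_mod_cast hk2p
  have hs0 : (0:ℝ) < (k₁:ℝ)+(k₂:ℝ) := by linarith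
  have hcast1 : ((2*k₁ : ℕ):ℝ) = 2*(k₁:ℝ) := by push_cast; ring
  have hcast2 : ((2*k₂ : ℕ):ℝ) = 2*(k₂:ℝ) := by push_cast; ring
  rw [hcast1, hcast2] at hξ1 hξ2 ⊢
  have hξx : (2*(k₁:ℝ))/(2*(k₁:ℝ)+2*(k₂:ℝ)) = (k₁:ℝ)/((k₁:ℝ)+(k₂:ℝ)) := by
    rw [div_eq_div_iff (by linarith) (by linarith)]
    ring
  rw [hξx] at hξ1 hξ2 ⊢
  have h1m : 1 - (k₁:ℝ)/((k₁:ℝ)+(k₂:ℝ)) = (k₂:ℝ)/((k₁:ℝ)+(k₂:ℝ)) := by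
    field_simp
    ring
  have hδ1 : δ*((k₁:ℝ)+(k₂:ℝ)) ≤ (k₁:ℝ) := by
    rw [le_div_iff₀ hs0] at hξ1
    linarith
  have hδ2 : δ*((k₁:ℝ)+(k₂:ℝ)) ≤ (k₂:ℝ) := by
    have h' : δ ≤ (k₂:ℝ)/((k₁:ℝ)+(k₂:ℝ)) := by rw [← h1m]; linarith
    rw [le_div_iff₀ hs0] at h'
    linarith
  have h6 : (6:ℝ)/δ ≤ 2*(k₁:ℝ)+2*(k₂:ℝ) := by
    have hc := Nat.le_ceil ((6:ℝ)/δ)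
    have hc2 : ((⌈(6:ℝ)/δ⌉₊ : ℕ):ℝ) ≤ 2*(k₁:ℝ)+2*(k₂:ℝ) := by
      have : ((⌈(6:ℝ)/δ⌉₊ : ℕ):ℝ) ≤ ((2*k₁+2*k₂ : ℕ):ℝ) := by exact_mod_cast hN₀
      push_cast at this
      linarith
    linarith
  have h6' : (6:ℝ) ≤ δ*(2*(k₁:ℝ)+2*(k₂:ℝ)) := by
    rw [div_le_iff₀ hδ0] at h6
    linarith
  have hx3 : (3:ℝ) ≤ (k₁:ℝ) := by nlinarith
  have hy3 : (3:ℝ) ≤ (k₂:ℝ) := by nlinarith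
  have hk1two : 2 ≤ k₁ := by
    have : (2:ℝ) ≤ (k₁:ℝ) := by linarith
    exact_mod_cast this
  have hk2two : 2 ≤ k₂ := by
    have : (2:ℝ) ≤ (k₂:ℝ) := by linarith
    exact_mod_cast this
  have hb1 := Eseq_bound k₁ hk1two
  have hb2 := Eseq_bound k₂ hk2two
  have hb3 := Eseq_bound (k₁+k₂) (by omega)
  push_cast at hb3
  have hq : ∀ z : ℝ, 0 < z → δ*(2*(k₁:ℝ)+2*(k₂:ℝ)) ≤ 2*z →
      40*((z^2)⁻¹) ≤ 160/(δ^2*(2*(k₁:ℝ)+2*(k₂:ℝ))^2) := by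
    intro z hz hzb
    have hδs : (0:ℝ) < δ*(2*(k₁:ℝ)+2*(k₂:ℝ)) := mul_pos hδ0 (by linarith)
    have h1 : (z^2)⁻¹ ≤ 4/(δ^2*(2*(k₁:ℝ)+2*(k₂:ℝ))^2) := by
      rw [show (4:ℝ)/(δ^2*(2*(k₁:ℝ)+2*(k₂:ℝ))^2)
          = ((δ^2*(2*(k₁:ℝ)+2*(k₂:ℝ))^2)/4)⁻¹ by rw [inv_div]]
      apply inv_anti₀ (by positivity)
      nlinarith [hδs]
    calc 40*((z^2)⁻¹) ≤ 40*(4/(δ^2*(2*(k₁:ℝ)+2*(k₂:ℝ))^2)) := by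
          have := mul_le_mul_of_nonneg_left h1 (show (0:ℝ) ≤ 40 by norm_num)
          linarith
      _ = 160/(δ^2*(2*(k₁:ℝ)+2*(k₂:ℝ))^2) := by ring
  have hq1 := hq _ hx0 (by linarith)
  have hq2 := hq _ hy0 (by linarith)
  have hq3 := hq _ hs0 (by nlinarith)
  have hVpos : (0:ℝ) < Vval := by
    have g1 := Real.Gamma_pos_of_pos (show (0:ℝ) < 3/4 by norm_num)
    have g2 := Real.Gamma_pos_of_pos (show (0:ℝ) < 5/4 by norm_num)
    have g3 := Real.Gamma_pos_of_pos (show (0:ℝ) < 4/3 by norm_num)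
    have g4 := Real.Gamma_pos_of_pos (show (0:ℝ) < 5/6 by norm_num)
    unfold Vval
    positivity
  have hV : Real.log Vval = (1/6)*Real.log 2 - Real.log Ksusy := by
    have h := congrArg Real.log Vval_mul_Ksusy
    rw [Real.log_mul hVpos.ne' Ksusy_pos.ne', Real.log_rpow (by norm_num)] at h
    linarith
  have hGT : Gsusy (2*k₁) (2*k₂)
      - (1/6 * Real.log (2*(k₁:ℝ)+2*(k₂:ℝ))
        + 1/6 * Real.log ((k₁:ℝ)/((k₁:ℝ)+(k₂:ℝ)) * (1 - (k₁:ℝ)/((k₁:ℝ)+(k₂:ℝ))))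
        - Real.log Ksusy
        + 13/72 * (1/((k₁:ℝ)/((k₁:ℝ)+(k₂:ℝ))) + 1/(1 - (k₁:ℝ)/((k₁:ℝ)+(k₂:ℝ))) - 1)
            / (2*(k₁:ℝ)+2*(k₂:ℝ)))
      = (Eseq k₁ - Real.log Vval) + (Eseq k₂ - Real.log Vval)
        - (Eseq (k₁+k₂) - Real.log Vval) := by
    rw [Gsusy_eq k₁ k₂]
    have e1 : Real.log (Qprod k₁)
        = Eseq k₁ + (1/6)*Real.log (k₁:ℝ) + 13/(144*(k₁:ℝ)) := by unfold Eseq; ring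
    have e2 : Real.log (Qprod k₂)
        = Eseq k₂ + (1/6)*Real.log (k₂:ℝ) + 13/(144*(k₂:ℝ)) := by unfold Eseq; ring
    have e3 : Real.log (Qprod (k₁+k₂))
        = Eseq (k₁+k₂) + (1/6)*Real.log ((k₁:ℝ)+(k₂:ℝ)) + 13/(144*((k₁:ℝ)+(k₂:ℝ))) := by
      unfold Eseq
      push_cast
      ring
    have l1 : Real.log (2*(k₁:ℝ)+2*(k₂:ℝ)) = Real.log 2 + Real.log ((k₁:ℝ)+(k₂:ℝ)) := by
      rw [show 2*(k₁:ℝ)+2*(k₂:ℝ) = 2*((k₁:ℝ)+(k₂:ℝ)) by ring,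
        Real.log_mul (by norm_num) hs0.ne']
    have l2 : Real.log ((k₁:ℝ)/((k₁:ℝ)+(k₂:ℝ)) * ((k₂:ℝ)/((k₁:ℝ)+(k₂:ℝ))))
        = Real.log (k₁:ℝ) + Real.log (k₂:ℝ) - 2*Real.log ((k₁:ℝ)+(k₂:ℝ)) := by
      rw [div_mul_div_comm,
        Real.log_div (by positivity) (by positivity),
        Real.log_mul hx0.ne' hy0.ne', Real.log_mul hs0.ne' hs0.ne']
      ring
    rw [e1, e2, e3, h1m, l1, l2, hV, one_div_div, one_div_div]
    have harith : 13/72 * (((k₁:ℝ)+(k₂:ℝ))/(k₁:ℝ) + ((k₁:ℝ)+(k₂:ℝ))/(k₂:ℝ) - 1)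
          / (2*(k₁:ℝ)+2*(k₂:ℝ))
        = 13/(144*(k₁:ℝ)) + 13/(144*(k₂:ℝ)) - 13/(144*((k₁:ℝ)+(k₂:ℝ))) := by
      field_simp
      ring
    rw [harith]
    ring
  rw [hGT]
  have a1 := abs_le.1 hb1
  have a2 := abs_le.1 hb2
  have a3 := abs_le.1 hb3
  have hR : 480/δ^2/((2*(k₁:ℝ)+2*(k₂:ℝ))^2)
      = 3*(160/(δ^2*(2*(k₁:ℝ)+2*(k₂:ℝ))^2)) := by
    rw [div_div]
    ring
  rw [abs_le]
  constructor <;>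
    linarith [a1.1, a1.2, a2.1, a2.2, a3.1, a3.2, hq1, hq2, hq3, hb1, hb2, hb3, hR]

end
end
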